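/- Let G be an entropy-minimal finite simple graph with vertex set V. Then for every nonempty S ⊆ V, the bipartite subgraph of G induced between c(S) and S has no matching saturating S, where c(S) = {v ∈ V ∖ S : N(v) ⊆ S}. -/

import Mathlib

noncomputable section

/-- `g : [q]^V → [q]` depends essentially on coordinate `u`: there exist two inputs that
differ only at coordinate `u` on which `g` takes different values. -/
def DependsEssentiallyOn {V : Type*} {q : ℕ} (g : (V → Fin q) → Fin q) (u : V) : Prop :=
  ∃ a b : V → Fin q, (∀ w, w ≠ u → a w = b w) ∧ g a ≠ g b

/-- The interaction graph of `f` is contained in the simple graph `G`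
(viewed as the symmetric loopless digraph with arcs `(u,v)` and `(v,u)` for every edge `uv`). -/
def IGLe {V : Type*} {q : ℕ} (G : SimpleGraph V) (f : (V → Fin q) → (V → Fin q)) : Prop :=
  ∀ u v : V, DependsEssentiallyOn (fun x => f x v) u → G.Adj u v

/-- The `q`-ary guessing number of a simple graph `G`: the maximum of `log_q |Fix(f)|`
over all `f` whose interaction graph is contained in `G`. -/
def guessing {V : Type*} (G : SimpleGraph V) (q : ℕ) : ℝ :=
  sSup {x : ℝ | ∃ f : (V → Fin q) → (V → Fin q),
    IGLe G f ∧ x = Real.logb q (Set.ncard {p : V → Fin q | f p = p})}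

/-- The entropy of a simple graph: the supremum over `q ≥ 2` of its `q`-guessing numbers. -/
def graphEntropy {V : Type*} (G : SimpleGraph V) : ℝ :=
  sSup {x : ℝ | ∃ q : ℕ, 2 ≤ q ∧ x = guessing G q}

/-- The set of all entropies of finite simple graphs. -/
def entropySet : Set ℝ := {x : ℝ | ∃ (n : ℕ) (G : SimpleGraph (Fin n)), graphEntropy G = x}

/-- A finite simple graph is entropy-minimal if no simple graph with fewer vertices has the same
fractional part of the entropy. -/
def EntropyMinimal {n : ℕ} (G : SimpleGraph (Fin n)) : Prop :=
  ∀ m : ℕ, m < n → ∀ G' : SimpleGraph (Fin m),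
    Int.fract (graphEntropy G') ≠ Int.fract (graphEntropy G)


/-- `c(S)`: the vertices outside `S` all of whose neighbours lie in `S`. -/
def cSet {V : Type*} (G : SimpleGraph V) (S : Set V) : Set V :=
  {v | v ∉ S ∧ ∀ w, G.Adj v w → w ∈ S}

/-- The bipartite subgraph of `G` induced between `C` and `S` has a matching saturating `S`:
each vertex of `S` is matched to a distinct neighbour in `C`. -/
def HasSaturatingMatching {V : Type*} (G : SimpleGraph V) (C S : Set V) : Prop :=
  ∃ g : V → V, (∀ s ∈ S, g s ∈ C ∧ G.Adj (g s) s) ∧ Set.InjOn g S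

namespace NoSatAux
open Function Set Real

/-- If `g` only depends on coordinates satisfying `P`, and `x,y` agree on `P`, then `g x = g y`. -/
theorem eq_of_agree {V : Type*} {q : ℕ} (g : (V → Fin q) → Fin q) (P : V → Prop)
    (h : ∀ u, DependsEssentiallyOn g u → P u) (y : V → Fin q) :
    ∀ (D : Finset V) (x : V → Fin q), (∀ u, P u → x u = y u) →
      (∀ u, u ∉ D → x u = y u) → g x = g y := by
  classical
  intro D
  induction D using Finset.induction_on with
  | empty =>
    intro x _ h2
    exact congrArg g (funext fun u => h2 u (Finset.notMem_empty u))
  | @insert u D hu ih =>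
    intro x h1 h2
    have step : g x = g (Function.update x u (y u)) := by
      by_contra hne
      have hdep : DependsEssentiallyOn g u :=
        ⟨x, Function.update x u (y u), fun w hw => (Function.update_of_ne hw _ _).symm, hne⟩
      have hxu : x u = y u := h1 u (h u hdep)
      apply hne
      rw [← hxu, Function.update_eq_self]
    rw [step]
    apply ih
    · intro u' hp
      rcases eq_or_ne u' u with rfl | hne
      · rw [Function.update_self]
      · rw [Function.update_of_ne hne]; exact h1 u' hp
    · intro w hw
      rcases eq_or_ne w u with rfl | hne
      · rw [Function.update_self]
      · rw [Function.update_of_ne hne]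
        exact h2 w (by simp [hw, hne])

theorem eq_of_agree' {n q : ℕ} (g : (Fin n → Fin q) → Fin q) (P : Fin n → Prop)
    (h : ∀ u, DependsEssentiallyOn g u → P u) (x y : Fin n → Fin q)
    (hxy : ∀ u, P u → x u = y u) : g x = g y :=
  eq_of_agree g P h y Finset.univ x hxy (fun u hu => absurd (Finset.mem_univ u) hu)

/-- constant functions witness `0` in the guessing set. -/
theorem exists_const {V : Type*} (G : SimpleGraph V) {q : ℕ} (hq : 1 ≤ q) :
    ∃ f : (V → Fin q) → (V → Fin q), IGLe G f ∧ ({p : V → Fin q | f p = p}).ncard = 1 := by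
  refine ⟨fun _ _ => ⟨0, hq⟩, fun u v ⟨a, b, hab, hne⟩ => absurd rfl hne, ?_⟩
  have : {p : V → Fin q | (fun _ => (⟨0, hq⟩ : Fin q)) = p} = {fun _ => (⟨0, hq⟩ : Fin q)} := by
    ext p
    simp [eq_comm, Set.mem_singleton_iff]
  rw [this, Set.ncard_singleton]

theorem logb_pow_mul {q k N : ℕ} (hq : 2 ≤ q) (hN : 0 < N) :
    Real.logb q ((q ^ k * N : ℕ) : ℝ) = k + Real.logb q N := by
  have hq1 : (1 : ℝ) < q := by exact_mod_cast hq
  have hqpos : (0 : ℝ) < q := by linarith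
  push_cast
  rw [Real.logb_mul (by positivity) (by exact_mod_cast hN.ne'), Real.logb_pow,
    Real.logb_self_eq_one hq1]
  ring

/-- every element of the guessing set is at most `card V`. -/
theorem gset_le {V : Type*} [Fintype V] (G : SimpleGraph V) {q : ℕ} (hq : 2 ≤ q) :
    ∀ x ∈ {x : ℝ | ∃ f : (V → Fin q) → (V → Fin q),
      IGLe G f ∧ x = Real.logb q (Set.ncard {p : V → Fin q | f p = p})},
      x ≤ (Fintype.card V : ℝ) := by
  classical
  rintro x ⟨f, _, rfl⟩
  have hq1 : (1 : ℝ) < q := by exact_mod_cast hq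
  set N := Set.ncard {p : V → Fin q | f p = p} with hN
  have hNle : N ≤ q ^ Fintype.card V := by
    have h1 : N ≤ (Set.univ : Set (V → Fin q)).ncard :=
      Set.ncard_le_ncard (Set.subset_univ _) Set.finite_univ
    rwa [Set.ncard_univ, Nat.card_eq_fintype_card, Fintype.card_fun, Fintype.card_fin] at h1
  rcases Nat.eq_zero_or_pos N with h0 | hpos
  · rw [h0]
    simp only [Nat.cast_zero, Real.logb_zero]
    positivity
  · calc Real.logb q N ≤ Real.logb q ((q : ℝ) ^ Fintype.card V) := by
          apply Real.logb_le_logb_of_le hq1 (by exact_mod_cast hpos)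
          exact_mod_cast hNle
      _ = Fintype.card V := by
          rw [Real.logb_pow, Real.logb_self_eq_one hq1, mul_one]

theorem gset_zero_mem {V : Type*} (G : SimpleGraph V) {q : ℕ} (hq : 2 ≤ q) :
    (0 : ℝ) ∈ {x : ℝ | ∃ f : (V → Fin q) → (V → Fin q),
      IGLe G f ∧ x = Real.logb q (Set.ncard {p : V → Fin q | f p = p})} := by
  obtain ⟨f, hf, hc⟩ := exists_const G (by omega : 1 ≤ q)
  exact ⟨f, hf, by rw [hc]; simp⟩

theorem guessing_nonneg {V : Type*} [Fintype V] (G : SimpleGraph V) {q : ℕ} (hq : 2 ≤ q) :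
    0 ≤ guessing G q :=
  le_csSup ⟨_, gset_le G hq⟩ (gset_zero_mem G hq)

theorem guessing_le_card {V : Type*} [Fintype V] (G : SimpleGraph V) {q : ℕ} (hq : 2 ≤ q) :
    guessing G q ≤ (Fintype.card V : ℝ) :=
  csSup_le ⟨0, gset_zero_mem G hq⟩ (gset_le G hq)

section Constructions
variable {n m q : ℕ} {G : SimpleGraph (Fin n)} {S : Set (Fin n)} {g : Fin n → Fin n}
  {ι : Fin m → Fin n}

theorem constructionA (hq : 2 ≤ q) (hS : S.Nonempty)
    (hg : ∀ s ∈ S, g s ∈ cSet G S ∧ G.Adj (g s) s) (hginj : Set.InjOn g S)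
    (hι : Function.Injective ι) (hrange : Set.range ι = (S ∪ g '' S)ᶜ)
    (f' : (Fin m → Fin q) → (Fin m → Fin q)) (hf' : IGLe (G.comap ι) f') :
    ∃ f : (Fin n → Fin q) → (Fin n → Fin q), IGLe G f ∧
      ({p : Fin n → Fin q | f p = p}).ncard
        = q ^ S.ncard * ({p : Fin m → Fin q | f' p = p}).ncard := by
  classical
  haveI : Nonempty (Fin n) := ⟨hS.choose⟩
  have hmem : ∀ v : Fin n, v ∉ S → v ∉ g '' S → v ∈ Set.range ι := by
    intro v h1 h2
    rw [hrange]
    simp only [Set.mem_compl_iff, Set.mem_union]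
    tauto
  have hspec : ∀ (v : Fin n) (h : v ∈ Set.range ι), ι h.choose = v := fun v h => h.choose_spec
  have hchooseι : ∀ (i : Fin m) (h : ι i ∈ Set.range ι), h.choose = i :=
    fun i h => hι (hspec _ h)
  have hgS : ∀ s ∈ S, g s ∉ S := fun s hs => ((hg s hs).1).1
  have hιT : ∀ i : Fin m, ι i ∉ S ∧ ι i ∉ g '' S := by
    intro i
    have : ι i ∈ (S ∪ g '' S)ᶜ := by rw [← hrange]; exact ⟨i, rfl⟩
    simp only [Set.mem_compl_iff, Set.mem_union] at this
    tauto
  have hinvmem : ∀ v ∈ g '' S, Function.invFunOn g S v ∈ S := by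
    intro v hv
    exact Function.invFunOn_mem ((Set.mem_image g S v).mp hv)
  have hinveq : ∀ v ∈ g '' S, g (Function.invFunOn g S v) = v := by
    intro v hv
    exact Function.invFunOn_eq ((Set.mem_image g S v).mp hv)
  have hinv1 : ∀ s ∈ S, Function.invFunOn g S (g s) = s := fun s hs =>
    hginj.leftInvOn_invFunOn hs
  set F : (Fin n → Fin q) → Fin n → Fin q := fun x v =>
    if hv : v ∈ S then x (g v)
    else if hv2 : v ∈ g '' S then x (Function.invFunOn g S v)
    else f' (x ∘ ι) (hmem v hv hv2).choose with hF
  have hIG : IGLe G F := by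
    intro u v hdep
    by_cases hv : v ∈ S
    · simp only [hF, dif_pos hv] at hdep
      obtain ⟨a, b, hab, hne⟩ := hdep
      have hu : u = g v := by
        by_contra hcon
        exact hne (hab (g v) (fun hh => hcon hh.symm))
      rw [hu]
      exact (hg v hv).2
    · by_cases hv2 : v ∈ g '' S
      · simp only [hF, dif_neg hv, dif_pos hv2] at hdep
        obtain ⟨a, b, hab, hne⟩ := hdep
        have hu : u = Function.invFunOn g S v := by
          by_contra hcon
          exact hne (hab _ (fun hh => hcon hh.symm))
        have hs : Function.invFunOn g S v ∈ S := hinvmem v hv2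
        have hgv : g (Function.invFunOn g S v) = v := hinveq v hv2
        have hadj := ((hg _ hs).2).symm
        rw [hgv] at hadj
        rw [hu]
        exact hadj
      · simp only [hF, dif_neg hv, dif_neg hv2] at hdep
        obtain ⟨a, b, hab, hne⟩ := hdep
        have hu : u ∈ Set.range ι := by
          by_contra hcon
          apply hne
          have : a ∘ ι = b ∘ ι := by
            funext i
            exact hab (ι i) (fun hh => hcon ⟨i, hh⟩)
          show f' (a ∘ ι) ((hmem v hv hv2).choose) = f' (b ∘ ι) ((hmem v hv hv2).choose)
          rw [this]
        obtain ⟨i, rfl⟩ := hu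
        have hdep' : DependsEssentiallyOn (fun y => f' y (hmem v hv hv2).choose) i :=
          ⟨a ∘ ι, b ∘ ι, fun w hw => hab (ι w) (fun hh => hw (hι hh)), hne⟩
        have hadj := hf' i _ hdep'
        have := hspec v (hmem v hv hv2)
        rw [← this]
        exact hadj
  refine ⟨F, hIG, ?_⟩
  -- the bijection
  set C : (↥S → Fin q) → (Fin m → Fin q) → (Fin n → Fin q) := fun z y v =>
    if hv : v ∈ S then z ⟨v, hv⟩
    else if hv2 : v ∈ g '' S then z ⟨Function.invFunOn g S v, hinvmem v hv2⟩
    else y (hmem v hv hv2).choose with hC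
  have hCι : ∀ z y, (C z y) ∘ ι = y := by
    intro z y
    funext i
    have h1 := (hιT i).1
    have h2 := (hιT i).2
    simp only [hC, Function.comp_apply, dif_neg h1, dif_neg h2]
    rw [hchooseι i]
  have hfix : ∀ z (y : {p : Fin m → Fin q // f' p = p}), F (C z y.1) = C z y.1 := by
    rintro z ⟨y, hy⟩
    funext v
    by_cases hv : v ∈ S
    · have h1 : g v ∉ S := hgS v hv
      have h2 : g v ∈ g '' S := ⟨v, hv, rfl⟩
      simp only [hF, hC, dif_pos hv, dif_neg h1, dif_pos h2]
      exact congrArg z (Subtype.ext (hinv1 v hv))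
    · by_cases hv2 : v ∈ g '' S
      · have hs : Function.invFunOn g S v ∈ S := hinvmem v hv2
        simp only [hF, hC, dif_neg hv, dif_pos hv2, dif_pos hs]
      · simp only [hF, hC, dif_neg hv, dif_neg hv2]
        rw [hCι z y, congrFun hy]
  set E : (↥S → Fin q) × {p : Fin m → Fin q // f' p = p} →
      ↥{p : Fin n → Fin q | F p = p} := fun zy => ⟨C zy.1 zy.2.1, hfix zy.1 zy.2⟩ with hE
  have hEbij : Function.Bijective E := by
    constructor
    · rintro ⟨z, y⟩ ⟨z', y'⟩ heq
      have heq' : C z y.1 = C z' y'.1 := congrArg Subtype.val heq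
      have hz : z = z' := by
        funext s
        have := congrFun heq' s.1
        simpa only [hC, dif_pos s.2] using this
      have hy : y = y' := by
        apply Subtype.ext
        funext i
        have := congrFun heq' (ι i)
        rw [show (C z y.1) (ι i) = ((C z y.1) ∘ ι) i from rfl,
          show (C z' y'.1) (ι i) = ((C z' y'.1) ∘ ι) i from rfl, hCι, hCι] at this
        exact this
      rw [hz, hy]
    · rintro ⟨x, hx⟩
      have hx' : F x = x := hx
      have hyfix : f' (x ∘ ι) = x ∘ ι := by
        funext i
        have h1 := (hιT i).1
        have h2 := (hιT i).2
        have := congrFun hx' (ι i)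
        simp only [hF, dif_neg h1, dif_neg h2] at this
        rw [hchooseι i] at this
        exact this
      refine ⟨⟨fun s => x s.1, ⟨x ∘ ι, hyfix⟩⟩, ?_⟩
      apply Subtype.ext
      show C _ _ = x
      funext v
      by_cases hv : v ∈ S
      · simp only [hC, dif_pos hv]
      · by_cases hv2 : v ∈ g '' S
        · simp only [hC, dif_neg hv, dif_pos hv2]
          have := congrFun hx' v
          simp only [hF, dif_neg hv, dif_pos hv2] at this
          exact this
        · simp only [hC, dif_neg hv, dif_neg hv2, Function.comp_apply]
          rw [hspec v (hmem v hv hv2)]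
  have hcardS : S.ncard = Fintype.card ↥S := by
    rw [← Nat.card_coe_set_eq, Nat.card_eq_fintype_card]
  calc ({p : Fin n → Fin q | F p = p}).ncard
      = Nat.card ↥{p : Fin n → Fin q | F p = p} := (Nat.card_coe_set_eq _).symm
    _ = Nat.card ((↥S → Fin q) × {p : Fin m → Fin q // f' p = p}) :=
        (Nat.card_eq_of_bijective E hEbij).symm
    _ = Nat.card (↥S → Fin q) * Nat.card {p : Fin m → Fin q // f' p = p} :=
        Nat.card_prod _ _
    _ = q ^ S.ncard * ({p : Fin m → Fin q | f' p = p}).ncard := by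
        rw [Nat.card_eq_fintype_card (α := ↥S → Fin q), Fintype.card_fun, Fintype.card_fin,
          hcardS]
        congr 1

theorem constructionB (hq : 2 ≤ q)
    (hg : ∀ s ∈ S, g s ∈ cSet G S ∧ G.Adj (g s) s)
    (hι : Function.Injective ι) (hrange : Set.range ι = (S ∪ g '' S)ᶜ)
    (f : (Fin n → Fin q) → (Fin n → Fin q)) (hf : IGLe G f) :
    ∃ f' : (Fin m → Fin q) → (Fin m → Fin q), IGLe (G.comap ι) f' ∧
      ({p : Fin n → Fin q | f p = p}).ncard
        ≤ q ^ S.ncard * ({p : Fin m → Fin q | f' p = p}).ncard := by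
  classical
  haveI : Nonempty (Fin q) := ⟨⟨0, by omega⟩⟩
  have hspec : ∀ (v : Fin n) (h : v ∈ Set.range ι), ι h.choose = v := fun v h => h.choose_spec
  have hchooseι : ∀ (i : Fin m) (h : ι i ∈ Set.range ι), h.choose = i :=
    fun i h => hι (hspec _ h)
  have hιT : ∀ i : Fin m, ι i ∉ S ∧ ι i ∉ g '' S := by
    intro i
    have : ι i ∈ (S ∪ g '' S)ᶜ := by rw [← hrange]; exact ⟨i, rfl⟩
    simp only [Set.mem_compl_iff, Set.mem_union] at this
    tauto
  have hmem : ∀ v : Fin n, v ∉ S → v ∉ Set.range ι → v ∈ g '' S := by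
    intro v h1 h2
    by_contra h3
    apply h2
    rw [hrange]
    simp only [Set.mem_compl_iff, Set.mem_union]
    tauto
  -- pigeonhole: pick the most popular restriction to S
  set Φ : (Fin n → Fin q) → (↥S → Fin q) := fun x s => x s.1 with hΦ
  set Fx : Finset (Fin n → Fin q) := Finset.univ.filter (fun p => f p = p) with hFx
  obtain ⟨z, _, hzmax⟩ := Finset.exists_max_image (Finset.univ : Finset (↥S → Fin q))
    (fun w => (Fx.filter (fun x => Φ x = w)).card) Finset.univ_nonempty
  set Az : Finset (Fin n → Fin q) := Fx.filter (fun x => Φ x = z) with hAz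
  have hcardS : S.ncard = Fintype.card ↥S := by
    rw [← Nat.card_coe_set_eq, Nat.card_eq_fintype_card]
  have hpigeon : Fx.card ≤ q ^ S.ncard * Az.card := by
    rw [Finset.card_eq_sum_card_fiberwise
      (f := Φ) (t := Finset.univ) (fun x _ => Finset.mem_univ (Φ x))]
    calc ∑ w ∈ Finset.univ, (Fx.filter (fun x => Φ x = w)).card
        ≤ (Finset.univ : Finset (↥S → Fin q)).card • Az.card :=
          Finset.sum_le_card_nsmul _ _ _ (fun w _ => hzmax w (Finset.mem_univ w))
      _ = q ^ S.ncard * Az.card := by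
          rw [smul_eq_mul, Finset.card_univ, Fintype.card_fun, Fintype.card_fin, hcardS]
  -- the reduced function
  set lift : (Fin m → Fin q) → (Fin n → Fin q) := fun y v =>
    if hv : v ∈ S then z ⟨v, hv⟩
    else if hv2 : v ∈ Set.range ι then y hv2.choose
    else ⟨0, by omega⟩ with hlift
  set f' : (Fin m → Fin q) → (Fin m → Fin q) := fun y j => f (lift y) (ι j) with hf'def
  have hIG : IGLe (G.comap ι) f' := by
    intro i j hdep
    obtain ⟨a, b, hab, hne⟩ := hdep
    have hlab : ∀ w : Fin n, w ≠ ι i → lift a w = lift b w := by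
      intro w hw
      by_cases h1 : w ∈ S
      · simp only [hlift, dif_pos h1]
      · by_cases h2 : w ∈ Set.range ι
        · simp only [hlift, dif_neg h1, dif_pos h2]
          apply hab
          intro hcon
          apply hw
          rw [← hspec w h2, hcon]
        · simp only [hlift, dif_neg h1, dif_neg h2]
    have hdep' : DependsEssentiallyOn (fun x => f x (ι j)) (ι i) := ⟨lift a, lift b, hlab, hne⟩
    exact hf (ι i) (ι j) hdep'
  refine ⟨f', hIG, ?_⟩
  -- members of Az restrict to fixed points of f'
  have hAzfix : ∀ x ∈ Az, f x = x ∧ ∀ s : ↥S, x s.1 = z s := by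
    intro x hx
    rw [hAz, Finset.mem_filter, hFx, Finset.mem_filter] at hx
    exact ⟨hx.1.2, fun s => congrFun hx.2 s⟩
  have hres : ∀ x ∈ Az, (x ∘ ι) ∈ {p : Fin m → Fin q | f' p = p} := by
    intro x hx
    obtain ⟨hxfix, hxz⟩ := hAzfix x hx
    show f' (x ∘ ι) = x ∘ ι
    funext j
    have hagree : f (lift (x ∘ ι)) (ι j) = f x (ι j) := by
      apply eq_of_agree' (fun p => f p (ι j)) (fun u => G.Adj u (ι j))
        (fun u hd => hf u (ι j) hd)
      intro u hadj
      by_cases h1 : u ∈ S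
      · simp only [hlift, dif_pos h1]
        exact (hxz ⟨u, h1⟩).symm
      · by_cases h2 : u ∈ Set.range ι
        · simp only [hlift, dif_neg h1, dif_pos h2, Function.comp_apply]
          rw [hspec u h2]
        · exfalso
          obtain ⟨s, hs, hgs⟩ := hmem u h1 h2
          have hinS : ι j ∈ S := ((hg s hs).1).2 (ι j) (by rw [hgs]; exact hadj)
          exact (hιT j).1 hinS
    show f (lift (x ∘ ι)) (ι j) = (x ∘ ι) j
    rw [hagree]
    exact congrFun hxfix (ι j)
  -- restriction is injective on Az
  have hinj : Set.InjOn (fun x => x ∘ ι) (Az : Set (Fin n → Fin q)) := by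
    intro x hx x' hx' heq
    obtain ⟨hxfix, hxz⟩ := hAzfix x hx
    obtain ⟨hxfix', hxz'⟩ := hAzfix x' hx'
    funext v
    by_cases h1 : v ∈ S
    · rw [hxz ⟨v, h1⟩, hxz' ⟨v, h1⟩]
    · by_cases h2 : v ∈ Set.range ι
      · obtain ⟨i, rfl⟩ := h2
        exact congrFun heq i
      · obtain ⟨s, hs, hgs⟩ := hmem v h1 h2
        have hagree : f x v = f x' v := by
          apply eq_of_agree' (fun p => f p v) (fun u => G.Adj u v) (fun u hd => hf u v hd)
          intro u hadj
          have huS : u ∈ S := ((hg s hs).1).2 u (by rw [hgs]; exact hadj.symm)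
          rw [hxz ⟨u, huS⟩, hxz' ⟨u, huS⟩]
        rw [← congrFun hxfix v, ← congrFun hxfix' v]
        exact hagree
  have himg : ((fun x => x ∘ ι) '' (Az : Set (Fin n → Fin q))) ⊆
      {p : Fin m → Fin q | f' p = p} := by
    rintro y ⟨x, hx, rfl⟩
    exact hres x hx
  have hcount : Az.card ≤ ({p : Fin m → Fin q | f' p = p}).ncard := by
    calc Az.card = (Az : Set (Fin n → Fin q)).ncard := (Set.ncard_coe_finset _).symm
      _ = ((fun x => x ∘ ι) '' (Az : Set (Fin n → Fin q))).ncard :=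
          (Set.ncard_image_of_injOn hinj).symm
      _ ≤ ({p : Fin m → Fin q | f' p = p}).ncard :=
          Set.ncard_le_ncard himg (Set.toFinite _)
  have hfixeq : ({p : Fin n → Fin q | f p = p}).ncard = Fx.card := by
    rw [← Set.ncard_coe_finset]
    congr 1
    ext p
    simp [hFx]
  rw [hfixeq]
  calc Fx.card ≤ q ^ S.ncard * Az.card := hpigeon
    _ ≤ q ^ S.ncard * ({p : Fin m → Fin q | f' p = p}).ncard :=
        Nat.mul_le_mul_left _ hcount

theorem guessing_eq (hq : 2 ≤ q) (hS : S.Nonempty)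
    (hg : ∀ s ∈ S, g s ∈ cSet G S ∧ G.Adj (g s) s) (hginj : Set.InjOn g S)
    (hι : Function.Injective ι) (hrange : Set.range ι = (S ∪ g '' S)ᶜ) :
    guessing G q = (S.ncard : ℝ) + guessing (G.comap ι) q := by
  classical
  have hq1 : (1 : ℝ) < q := by exact_mod_cast hq
  set A : Set ℝ := {x | ∃ f : (Fin n → Fin q) → (Fin n → Fin q),
    IGLe G f ∧ x = Real.logb q (Set.ncard {p : Fin n → Fin q | f p = p})} with hA
  set B : Set ℝ := {x | ∃ f' : (Fin m → Fin q) → (Fin m → Fin q),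
    IGLe (G.comap ι) f' ∧ x = Real.logb q (Set.ncard {p : Fin m → Fin q | f' p = p})} with hB
  have hgA : guessing G q = sSup A := rfl
  have hgB : guessing (G.comap ι) q = sSup B := rfl
  have hAne : A.Nonempty := ⟨0, by rw [hA]; exact gset_zero_mem G hq⟩
  have hAbdd : BddAbove A := ⟨(Fintype.card (Fin n) : ℝ), by
    rw [hA]; exact gset_le G hq⟩
  have hBne : B.Nonempty := ⟨0, by rw [hB]; exact gset_zero_mem (G.comap ι) hq⟩
  have hBbdd : BddAbove B := ⟨(Fintype.card (Fin m) : ℝ), by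
    rw [hB]; exact gset_le (G.comap ι) hq⟩
  have hBnonneg : 0 ≤ sSup B := le_csSup hBbdd (by rw [hB]; exact gset_zero_mem (G.comap ι) hq)
  -- `S.ncard ≤ sSup A`
  have hkA : (S.ncard : ℝ) ≤ sSup A := by
    obtain ⟨f₀', hf₀', hc₀⟩ := exists_const (G.comap ι) (by omega : 1 ≤ q)
    obtain ⟨f₀, hf₀, hcnt⟩ := constructionA hq hS hg hginj hι hrange f₀' hf₀'
    rw [hc₀, mul_one] at hcnt
    have hmem : (S.ncard : ℝ) ∈ A := by
      rw [hA]
      refine ⟨f₀, hf₀, ?_⟩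
      rw [hcnt]
      have : ((q ^ S.ncard : ℕ) : ℝ) = (q : ℝ) ^ S.ncard := by push_cast; ring
      rw [this, Real.logb_pow, Real.logb_self_eq_one hq1, mul_one]
    exact le_csSup hAbdd hmem
  rw [hgA, hgB]
  apply le_antisymm
  · apply csSup_le hAne
    intro x hx
    rw [hA] at hx
    obtain ⟨f, hf, rfl⟩ := hx
    obtain ⟨f', hf', hle⟩ := constructionB hq hg hι hrange f hf
    rcases Nat.eq_zero_or_pos (Set.ncard {p : Fin n → Fin q | f p = p}) with h0 | hpos
    · rw [h0]
      simp only [Nat.cast_zero, Real.logb_zero]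
      exact add_nonneg (Nat.cast_nonneg _) hBnonneg
    · have hN' : 0 < Set.ncard {p : Fin m → Fin q | f' p = p} := by
        rcases Nat.eq_zero_or_pos (Set.ncard {p : Fin m → Fin q | f' p = p}) with h | h
        · rw [h, mul_zero] at hle; omega
        · exact h
      have h1 : Real.logb q (Set.ncard {p : Fin n → Fin q | f p = p})
          ≤ Real.logb q ((q ^ S.ncard * Set.ncard {p : Fin m → Fin q | f' p = p} : ℕ) : ℝ) :=
        Real.logb_le_logb_of_le hq1 (by exact_mod_cast hpos) (by exact_mod_cast hle)
      rw [logb_pow_mul hq hN'] at h1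
      have h2 : Real.logb q (Set.ncard {p : Fin m → Fin q | f' p = p}) ≤ sSup B :=
        le_csSup hBbdd (by rw [hB]; exact ⟨f', hf', rfl⟩)
      linarith
  · have h2 : sSup B ≤ sSup A - S.ncard := by
      apply csSup_le hBne
      intro y hy
      rw [hB] at hy
      obtain ⟨f', hf', rfl⟩ := hy
      obtain ⟨f, hf, hcnt⟩ := constructionA hq hS hg hginj hι hrange f' hf'
      rcases Nat.eq_zero_or_pos (Set.ncard {p : Fin m → Fin q | f' p = p}) with h0 | hpos
      · rw [h0]
        simp only [Nat.cast_zero, Real.logb_zero]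
        linarith
      · have hmemA : ((S.ncard : ℝ) + Real.logb q (Set.ncard {p : Fin m → Fin q | f' p = p})) ∈ A := by
          rw [hA]
          exact ⟨f, hf, by rw [hcnt, logb_pow_mul hq hpos]⟩
        have := le_csSup hAbdd hmemA
        linarith
    linarith

theorem entropy_eq (hS : S.Nonempty)
    (hg : ∀ s ∈ S, g s ∈ cSet G S ∧ G.Adj (g s) s) (hginj : Set.InjOn g S)
    (hι : Function.Injective ι) (hrange : Set.range ι = (S ∪ g '' S)ᶜ) :
    graphEntropy G = (S.ncard : ℝ) + graphEntropy (G.comap ι) := by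
  classical
  set EA : Set ℝ := {x | ∃ q : ℕ, 2 ≤ q ∧ x = guessing G q} with hEA
  set EB : Set ℝ := {x | ∃ q : ℕ, 2 ≤ q ∧ x = guessing (G.comap ι) q} with hEB
  have hgA : graphEntropy G = sSup EA := rfl
  have hgB : graphEntropy (G.comap ι) = sSup EB := rfl
  have hset : EA = (fun y => (S.ncard : ℝ) + y) '' EB := by
    rw [hEA, hEB]
    ext x
    constructor
    · rintro ⟨q, hq, rfl⟩
      exact ⟨guessing (G.comap ι) q, ⟨q, hq, rfl⟩,
        (guessing_eq hq hS hg hginj hι hrange).symm⟩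
    · rintro ⟨y, ⟨q, hq, rfl⟩, rfl⟩
      exact ⟨q, hq, (guessing_eq hq hS hg hginj hι hrange).symm⟩
  have hBne : EB.Nonempty := ⟨guessing (G.comap ι) 2, by rw [hEB]; exact ⟨2, le_refl 2, rfl⟩⟩
  have hBbdd : BddAbove EB := ⟨(Fintype.card (Fin m) : ℝ), by
    rintro y hy
    rw [hEB] at hy
    obtain ⟨q, hq, rfl⟩ := hy
    exact guessing_le_card (G.comap ι) hq⟩
  have himgbdd : BddAbove ((fun y => (S.ncard : ℝ) + y) '' EB) := by
    obtain ⟨M, hM⟩ := hBbdd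
    refine ⟨(S.ncard : ℝ) + M, ?_⟩
    rintro x ⟨y, hy, rfl⟩
    exact add_le_add le_rfl (hM hy)
  rw [hgA, hgB, hset]
  apply le_antisymm
  · apply csSup_le (hBne.image _)
    rintro x ⟨y, hy, rfl⟩
    exact add_le_add le_rfl (le_csSup hBbdd hy)
  · have h2 : sSup EB ≤ sSup ((fun y => (S.ncard : ℝ) + y) '' EB) - S.ncard := by
      apply csSup_le hBne
      intro y hy
      have := le_csSup himgbdd ⟨y, hy, rfl⟩
      simp only at this
      linarith
    linarith

end Constructions

end NoSatAux


/-- If `G` is entropy-minimal, then for every nonempty `S`, the bipartite subgraph of `G`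
between `c(S)` and `S` has no matching saturating `S`. -/
theorem entropyMinimal_no_saturating_matching {n : ℕ} (G : SimpleGraph (Fin n))
    (hmin : EntropyMinimal G) (S : Set (Fin n)) (hS : S.Nonempty) :
    ¬ HasSaturatingMatching G (cSet G S) S := by
  classical
  rintro ⟨g, hg, hginj⟩
  set T : Set (Fin n) := S ∪ g '' S with hT
  haveI : Fintype ↥(Tᶜ) := Fintype.ofFinite _
  set m := Fintype.card ↥(Tᶜ) with hm
  let e : Fin m ≃ ↥(Tᶜ) := (Fintype.equivFin ↥(Tᶜ)).symm
  let ι : Fin m → Fin n := fun i => (e i : Fin n)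
  have hι : Function.Injective ι := fun i j hij => e.injective (Subtype.ext hij)
  have hrange : Set.range ι = (S ∪ g '' S)ᶜ := by
    ext v
    constructor
    · rintro ⟨i, rfl⟩
      exact (e i).2
    · intro hv
      exact ⟨e.symm ⟨v, hv⟩, by simp [ι]⟩
  have hmn : m < n := by
    have h1 : m = (Tᶜ).ncard := by
      rw [hm, ← Nat.card_coe_set_eq, Nat.card_eq_fintype_card]
    have hssub : Tᶜ ⊂ Set.univ := by
      rw [Set.ssubset_univ_iff]
      intro hcon
      obtain ⟨s, hs⟩ := hS
      have : s ∈ Tᶜ := hcon ▸ Set.mem_univ s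
      exact this (Set.mem_union_left _ hs)
    have h2 := Set.ncard_lt_ncard hssub Set.finite_univ
    rw [Set.ncard_univ, Nat.card_eq_fintype_card, Fintype.card_fin] at h2
    omega
  have hE := NoSatAux.entropy_eq (G := G) (S := S) (g := g) (ι := ι) hS hg hginj hι hrange
  refine hmin m hmn (G.comap ι) ?_
  rw [hE, show ((S.ncard : ℕ) : ℝ) = ((S.ncard : ℤ) : ℝ) by push_cast; ring,
    Int.fract_intCast_add]

end
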